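/- Let X be a metric space and Y ⊆ X an α-contracting closed set. For every subset Z ⊆ X, the diameter of the nearest-point projection π_Y(Z) satisfies diam(π_Y(Z)) ≤ diam(Z) + 4α. -/

import Mathlib

open Metric Set MeasureTheory

variable {X : Type*} [MetricSpace X]

/-- A map `γ` is a geodesic on the parameter set `s`. -/
def IsGeodesicOn (γ : ℝ → X) (s : Set ℝ) : Prop :=
  ∀ t ∈ s, ∀ t' ∈ s, dist (γ t) (γ t') = |t - t'|

/-- The set of nearest-point projections of points of `Z` onto `Y`. -/
def projSet (Y Z : Set X) : Set X :=
  {y | y ∈ Y ∧ ∃ z ∈ Z, dist z y = Metric.infDist z Y}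

/-- `Y` is an `α`-contracting closed subset: any geodesic at distance `≥ α` from `Y`
has projection onto `Y` of diameter `≤ α`. -/
def IsContractingSet (α : ℝ) (Y : Set X) : Prop :=
  IsClosed Y ∧ ∀ (γ : ℝ → X) (s : Set ℝ), IsGeodesicOn γ s →
    (∀ t ∈ s, α ≤ Metric.infDist (γ t) Y) →
    Metric.diam (projSet Y (γ '' s)) ≤ α

/-- `X` is a geodesic space: any two points are joined by a geodesic. -/
def GeodesicSpace (X : Type*) [MetricSpace X] : Prop :=
  ∀ x y : X, ∃ γ : ℝ → X, γ 0 = x ∧ γ (dist x y) = y ∧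
    IsGeodesicOn γ (Set.Icc 0 (dist x y))

/-- The projection set of a bounded set is bounded. -/
lemma projSet_isBounded {Y Z : Set X} (hZ : Bornology.IsBounded Z) :
    Bornology.IsBounded (projSet Y Z) := by
  rcases (projSet Y Z).eq_empty_or_nonempty with h | ⟨p₀, hp₀Y, z₀, hz₀, hz₀p⟩
  · simp [h]
  obtain ⟨r, hr⟩ := hZ.subset_closedBall p₀
  have : projSet Y Z ⊆ Metric.closedBall p₀ (2 * r) := by
    rintro y ⟨hyY, z, hz, hzy⟩
    have h1 : dist z p₀ ≤ r := hr hz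
    have h2 : dist y z ≤ dist z p₀ := by
      rw [dist_comm, hzy]; exact Metric.infDist_le_dist_of_mem hp₀Y
    simp only [Metric.mem_closedBall]
    calc dist y p₀ ≤ dist y z + dist z p₀ := dist_triangle _ _ _
      _ ≤ 2 * r := by linarith
  exact (Metric.isBounded_closedBall).subset this

/-- Key estimate: if `γ` is a geodesic on `[0,d]`, `t₁ ∈ [0,d]` is a time where the
geodesic is within `α` of `Y`, the geodesic stays at distance `≥ α` from `Y` before `t₁`,
and `p` is a nearest-point projection of `γ 0`, then `dist p (γ t₁) ≤ 2α`. -/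
lemma key_estimate [ProperSpace X] {α : ℝ} (hα : 0 < α) {Y : Set X}
    (hY : IsContractingSet α Y) {γ : ℝ → X} {d t₁ : ℝ}
    (hgeo : IsGeodesicOn γ (Set.Icc 0 d))
    (ht₁ : t₁ ∈ Set.Icc 0 d) (hclose : Metric.infDist (γ t₁) Y ≤ α)
    (hfar : ∀ t ∈ Set.Ico 0 t₁, α ≤ Metric.infDist (γ t) Y)
    {p : X} (hpY : p ∈ Y) (hzp : dist (γ 0) p = Metric.infDist (γ 0) Y) :
    dist p (γ t₁) ≤ 2 * α := by
  rcases eq_or_lt_of_le ht₁.1 with h0 | h0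
  · -- t₁ = 0
    rw [← h0] at hclose
    rw [← h0, dist_comm, hzp]
    linarith
  · -- 0 < t₁
    apply le_of_forall_pos_le_add
    intro ε hε
    set δ : ℝ := min (ε / 2) t₁ with hδdef
    have hδpos : 0 < δ := lt_min (by linarith) h0
    have hδle : δ ≤ t₁ := min_le_right _ _
    set t : ℝ := t₁ - δ with htdef
    have htIco : t ∈ Set.Ico 0 t₁ := ⟨by simp only [htdef]; linarith, by simp only [htdef]; linarith⟩
    have htIcc : t ∈ Set.Icc 0 d := ⟨htIco.1, le_trans (le_of_lt htIco.2) ht₁.2⟩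
    -- nearest point of γ t
    obtain ⟨y, hyY, hy⟩ := hY.1.exists_infDist_eq_dist ⟨p, hpY⟩ (γ t)
    -- the geodesic restricted to [0, t₁) stays far from Y
    have hsub : Set.Ico 0 t₁ ⊆ Set.Icc 0 d := fun s hs =>
      ⟨hs.1, le_trans (le_of_lt hs.2) ht₁.2⟩
    have hgeo' : IsGeodesicOn γ (Set.Ico 0 t₁) := fun a ha b hb =>
      hgeo a (hsub ha) b (hsub hb)
    have hdiam : Metric.diam (projSet Y (γ '' Set.Ico 0 t₁)) ≤ α :=
      hY.2 γ _ hgeo' hfar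
    -- p and y are both in that projection set
    have hpmem : p ∈ projSet Y (γ '' Set.Ico 0 t₁) :=
      ⟨hpY, γ 0, ⟨0, ⟨le_refl 0, h0⟩, rfl⟩, hzp⟩
    have hymem : y ∈ projSet Y (γ '' Set.Ico 0 t₁) :=
      ⟨hyY, γ t, ⟨t, htIco, rfl⟩, hy.symm⟩
    -- the image is bounded, hence the projection set is bounded
    have himb : Bornology.IsBounded (γ '' Set.Ico 0 t₁) := by
      apply Bornology.IsBounded.subset (Metric.isBounded_closedBall (x := γ 0) (r := d))
      rintro _ ⟨s, hs, rfl⟩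
      have := hgeo s (hsub hs) 0 ⟨le_refl 0, le_trans ht₁.1 ht₁.2⟩
      simp only [Metric.mem_closedBall]
      rw [this, sub_zero, abs_of_nonneg hs.1]
      exact le_trans (le_of_lt hs.2) ht₁.2
    have hpy : dist p y ≤ α :=
      le_trans (Metric.dist_le_diam_of_mem (projSet_isBounded himb) hpmem hymem) hdiam
    -- distance estimates
    have hdtt₁ : dist (γ t) (γ t₁) = δ := by
      rw [hgeo t htIcc t₁ ht₁, htdef]
      rw [show t₁ - δ - t₁ = -δ by ring, abs_neg, abs_of_pos hδpos]
    have hinf : Metric.infDist (γ t) Y ≤ α + δ := by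
      calc Metric.infDist (γ t) Y ≤ Metric.infDist (γ t₁) Y + dist (γ t) (γ t₁) :=
            Metric.infDist_le_infDist_add_dist
        _ ≤ α + δ := by rw [hdtt₁]; linarith
    have hyt : dist y (γ t) ≤ α + δ := by
      rw [dist_comm, ← hy]; exact hinf
    have htri : dist p (γ t₁) ≤ dist p y + dist y (γ t) + dist (γ t) (γ t₁) :=
      dist_triangle4 _ _ _ _
    have hδε : δ ≤ ε / 2 := min_le_left _ _
    rw [hdtt₁] at htri
    linarith

/-- Core estimate: nearest-point projections move points by at most `dist + 4α`. -/
lemma dist_proj_le [ProperSpace X] (hX : GeodesicSpace X) {α : ℝ} (hα : 0 < α)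
    {Y : Set X} (hY : IsContractingSet α Y) {z w p q : X}
    (hpY : p ∈ Y) (hzp : dist z p = Metric.infDist z Y)
    (hqY : q ∈ Y) (hwq : dist w q = Metric.infDist w Y) :
    dist p q ≤ dist z w + 4 * α := by
  obtain ⟨γ, hγ0, hγd, hgeo⟩ := hX z w
  set d : ℝ := dist z w with hd
  have hd0 : 0 ≤ d := dist_nonneg
  set f : ℝ → ℝ := fun t => Metric.infDist (γ t) Y with hf
  set A : Set ℝ := Set.Icc 0 d ∩ f ⁻¹' Set.Iic α with hA
  by_cases hAne : A.Nonempty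
  · -- A nonempty: split the geodesic
    -- A is closed
    have hlip : LipschitzOnWith 1 γ (Set.Icc 0 d) := by
      rw [lipschitzOnWith_iff_dist_le_mul]
      intro a ha b hb
      rw [hgeo a ha b hb]
      simp [Real.dist_eq]
    have hcont : ContinuousOn f (Set.Icc 0 d) := by
      have := (Metric.lipschitz_infDist_pt Y).comp_lipschitzOnWith hlip
      exact this.continuousOn
    have hAclosed : IsClosed A :=
      hcont.preimage_isClosed_of_isClosed isClosed_Icc isClosed_Iic
    have hAbdd_below : BddBelow A := ⟨0, fun a ha => ha.1.1⟩
    have hAbdd_above : BddAbove A := ⟨d, fun a ha => ha.1.2⟩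
    set t₁ : ℝ := sInf A with ht₁def
    set t₂ : ℝ := sSup A with ht₂def
    have ht₁A : t₁ ∈ A := hAclosed.csInf_mem hAne hAbdd_below
    have ht₂A : t₂ ∈ A := hAclosed.csSup_mem hAne hAbdd_above
    -- estimate for p
    have hp2 : dist p (γ t₁) ≤ 2 * α := by
      apply key_estimate hα hY hgeo ht₁A.1 ht₁A.2
      · intro t ht
        by_contra hcon
        push_neg at hcon
        have htA : t ∈ A := ⟨⟨ht.1, le_trans (le_of_lt ht.2) ht₁A.1.2⟩, le_of_lt hcon⟩
        exact absurd (csInf_le hAbdd_below htA) (not_le_of_gt ht.2)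
      · exact hpY
      · rw [hγ0]; exact hzp
    -- estimate for q, using the reversed geodesic
    set γ' : ℝ → X := fun t => γ (d - t) with hγ'def
    have hgeo' : IsGeodesicOn γ' (Set.Icc 0 d) := by
      intro a ha b hb
      have ha' : d - a ∈ Set.Icc 0 d := ⟨by linarith [ha.2], by linarith [ha.1]⟩
      have hb' : d - b ∈ Set.Icc 0 d := ⟨by linarith [hb.2], by linarith [hb.1]⟩
      rw [hγ'def]
      simp only
      rw [hgeo _ ha' _ hb', show d - a - (d - b) = -(a - b) by ring, abs_neg]
    have hq2 : dist q (γ t₂) ≤ 2 * α := by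
      have ht₂' : d - t₂ ∈ Set.Icc 0 d := ⟨by linarith [ht₂A.1.2], by linarith [ht₂A.1.1]⟩
      have hkey : dist q (γ' (d - t₂)) ≤ 2 * α := by
        apply key_estimate hα hY hgeo' ht₂'
        · show Metric.infDist (γ (d - (d - t₂))) Y ≤ α
          rw [show d - (d - t₂) = t₂ by ring]
          exact ht₂A.2
        · intro t ht
          show α ≤ Metric.infDist (γ (d - t)) Y
          by_contra hcon
          push_neg at hcon
          have htA : d - t ∈ A :=
            ⟨⟨by linarith [ht.2, ht₂A.1.1], by linarith [ht.1]⟩, le_of_lt hcon⟩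
          have : d - t ≤ t₂ := le_csSup hAbdd_above htA
          linarith [ht.2]
        · exact hqY
        · show dist (γ (d - 0)) q = Metric.infDist (γ (d - 0)) Y
          rw [sub_zero, hγd]
          exact hwq
      rw [hγ'def] at hkey
      simp only at hkey
      rwa [show d - (d - t₂) = t₂ by ring] at hkey
    -- combine
    have hmid : dist (γ t₁) (γ t₂) ≤ d := by
      rw [hgeo t₁ ht₁A.1 t₂ ht₂A.1]
      rw [abs_sub_le_iff]
      constructor
      · linarith [ht₁A.1.2, ht₂A.1.1]
      · linarith [ht₂A.1.2, ht₁A.1.1]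
    have htri : dist p q ≤ dist p (γ t₁) + dist (γ t₁) (γ t₂) + dist (γ t₂) q :=
      dist_triangle4 _ _ _ _
    rw [dist_comm q (γ t₂)] at hq2
    linarith
  · -- A empty: whole geodesic is far from Y
    have hfar : ∀ t ∈ Set.Icc 0 d, α ≤ f t := by
      intro t ht
      by_contra hcon
      push_neg at hcon
      exact hAne ⟨t, ht, le_of_lt hcon⟩
    have hdiam : Metric.diam (projSet Y (γ '' Set.Icc 0 d)) ≤ α :=
      hY.2 γ _ hgeo hfar
    have hpmem : p ∈ projSet Y (γ '' Set.Icc 0 d) :=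
      ⟨hpY, γ 0, ⟨0, ⟨le_refl 0, hd0⟩, rfl⟩, by rw [hγ0]; exact hzp⟩
    have hqmem : q ∈ projSet Y (γ '' Set.Icc 0 d) :=
      ⟨hqY, γ d, ⟨d, ⟨hd0, le_refl d⟩, rfl⟩, by rw [hγd]; exact hwq⟩
    have himb : Bornology.IsBounded (γ '' Set.Icc 0 d) := by
      apply Bornology.IsBounded.subset (Metric.isBounded_closedBall (x := γ 0) (r := d))
      rintro _ ⟨s, hs, rfl⟩
      have := hgeo s hs 0 ⟨le_refl 0, hd0⟩
      simp only [Metric.mem_closedBall]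
      rw [this, sub_zero, abs_of_nonneg hs.1]
      exact hs.2
    have := Metric.dist_le_diam_of_mem (projSet_isBounded himb) hpmem hqmem
    linarith [dist_nonneg (x := z) (y := w)]

/-- The nearest point projection onto an `α`-contracting set is large-scale 1-Lipschitz:
`diam (π_Y(Z)) ≤ diam Z + 4α`. -/
theorem projection_diam_le [ProperSpace X] (hX : GeodesicSpace X)
    {α : ℝ} (hα : 0 < α) {Y : Set X} (hY : IsContractingSet α Y) (Z : Set X) :
    EMetric.diam (projSet Y Z) ≤ EMetric.diam Z + ENNReal.ofReal (4 * α) := by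
  refine EMetric.diam_le fun p hp q hq => ?_
  obtain ⟨hpY, z, hz, hzp⟩ := hp
  obtain ⟨hqY, w, hw, hwq⟩ := hq
  have h := dist_proj_le hX hα hY hpY hzp hqY hwq
  calc edist p q = ENNReal.ofReal (dist p q) := edist_dist _ _
    _ ≤ ENNReal.ofReal (dist z w + 4 * α) := ENNReal.ofReal_le_ofReal h
    _ = ENNReal.ofReal (dist z w) + ENNReal.ofReal (4 * α) :=
        ENNReal.ofReal_add dist_nonneg (by positivity)
    _ ≤ EMetric.diam Z + ENNReal.ofReal (4 * α) := by
        refine add_le_add ?_ le_rfl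
        rw [← edist_dist]
        exact EMetric.edist_le_diam_of_mem hz hw
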